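/- arXiv:2205.07519 — 2 statements merged into one kernel-verified Lean document; each statement's English description precedes it below -/
import Mathlib

section
/- For the class of additive valuations over goods, ρ_{2,1} = 4/5: for every additive valuation v over m ≥ 2 items, the nested share NS_{2,1}(v) is at least (4/5)·MMS_2(v), and there exists an additive valuation (item values 3,2,2,2,1) for which NS_{2,1}(v) = 4 while MMS_2(v) = 5. -/
/-- The maximin share for 2 agents of the additive valuation on `Fin m` with item
values `w` (items indexed in non-increasing value order). -/
noncomputable def MMS2 {m : ℕ} (w : Fin m → ℝ) : ℝ :=
  sSup {x : ℝ | ∃ B : Finset (Fin m), x ≤ ∑ i ∈ B, w i ∧ x ≤ ∑ i ∈ Bᶜ, w i}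

/-- The nested share `NS_{2,1}`: the best value over partitions in which bundle `B₁`
consists of the top item `e₁` together with a suffix of smallest items, and bundle `B₂`
is the consecutive middle block `e₂, …, e_t`. -/
noncomputable def NS21 {m : ℕ} (w : Fin m → ℝ) : ℝ :=
  sSup {x : ℝ | ∃ t : ℕ, 2 ≤ t ∧ t ≤ m ∧
    x ≤ ∑ i ∈ Finset.univ.filter (fun i : Fin m => i.val = 0 ∨ t ≤ i.val), w i ∧
    x ≤ ∑ i ∈ Finset.univ.filter (fun i : Fin m => 1 ≤ i.val ∧ i.val < t), w i}

lemma ns_compl_sum {m : ℕ} (w : Fin m → ℝ) (t : ℕ) :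
    ∑ i ∈ Finset.univ.filter (fun i : Fin m => i.val = 0 ∨ t ≤ i.val), w i
      = (∑ i, w i) - ∑ i ∈ Finset.univ.filter (fun i : Fin m => 1 ≤ i.val ∧ i.val < t), w i := by
  have h := Finset.sum_filter_add_sum_filter_not Finset.univ
    (fun i : Fin m => 1 ≤ i.val ∧ i.val < t) w
  have he : Finset.univ.filter (fun i : Fin m => ¬(1 ≤ i.val ∧ i.val < t))
      = Finset.univ.filter (fun i : Fin m => i.val = 0 ∨ t ≤ i.val) := by
    apply Finset.filter_congr
    intro i _
    constructor <;> intro h <;> omega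
  rw [he] at h
  linarith

lemma g_succ {m t : ℕ} (w : Fin m → ℝ) (h1 : 1 ≤ t) (h2 : t < m) :
    ∑ i ∈ Finset.univ.filter (fun i : Fin m => 1 ≤ i.val ∧ i.val < t + 1), w i
      = (∑ i ∈ Finset.univ.filter (fun i : Fin m => 1 ≤ i.val ∧ i.val < t), w i) + w ⟨t, h2⟩ := by
  have he : Finset.univ.filter (fun i : Fin m => 1 ≤ i.val ∧ i.val < t + 1)
      = insert ⟨t, h2⟩ (Finset.univ.filter (fun i : Fin m => 1 ≤ i.val ∧ i.val < t)) := by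
    ext i
    simp [Fin.ext_iff]
    omega
  rw [he, Finset.sum_insert (by simp)]
  ring

lemma key_combinatorial {m : ℕ} (w : Fin m → ℝ) (hm : 2 ≤ m) (hw : ∀ i, 0 ≤ w i)
    (hsort : ∀ i j : Fin m, i ≤ j → w j ≤ w i) (μ : ℝ) (hμ : 0 < μ)
    (B : Finset (Fin m)) (hB : μ ≤ ∑ i ∈ B, w i) (hBc : μ ≤ ∑ i ∈ Bᶜ, w i) :
    ∃ t : ℕ, 2 ≤ t ∧ t ≤ m ∧
      4/5*μ ≤ (∑ i, w i) - ∑ i ∈ Finset.univ.filter (fun i : Fin m => 1 ≤ i.val ∧ i.val < t), w i ∧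
      4/5*μ ≤ ∑ i ∈ Finset.univ.filter (fun i : Fin m => 1 ≤ i.val ∧ i.val < t), w i := by
  haveI : NeZero m := ⟨by omega⟩
  by_contra hcon
  push_neg at hcon
  set S : ℝ := ∑ i, w i with hSdef
  set g : ℕ → ℝ := fun t => ∑ i ∈ Finset.univ.filter (fun i : Fin m => 1 ≤ i.val ∧ i.val < t), w i
    with hgdef
  set c : ℝ := 4/5*μ with hcdef
  have hcon' : ∀ t : ℕ, 2 ≤ t → t ≤ m → c ≤ S - g t → g t < c := hcon
  have hgstep : ∀ (t : ℕ) (h1 : 1 ≤ t) (h2 : t < m), g (t + 1) = g t + w ⟨t, h2⟩ :=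
    fun t h1 h2 => g_succ w h1 h2
  have hcμ : c < μ := by rw [hcdef]; linarith
  have hzle : ∀ i : Fin m, (0 : Fin m) ≤ i := fun i => by
    rw [Fin.le_def]; simp
  have hmono : ∀ i : Fin m, w i ≤ w 0 := fun i => hsort 0 i (hzle i)
  have hS2 : 2*μ ≤ S := by
    have := Finset.sum_add_sum_compl B w
    linarith
  -- the side not containing 0 shows g m ≥ μ
  have hgm : μ ≤ g m := by
    have hside : ∃ D : Finset (Fin m), (0 : Fin m) ∉ D ∧ μ ≤ ∑ i ∈ D, w i := by
      by_cases h0 : (0 : Fin m) ∈ B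
      · exact ⟨Bᶜ, by simp [h0], hBc⟩
      · exact ⟨B, h0, hB⟩
    obtain ⟨D, hD0, hDμ⟩ := hside
    refine le_trans hDμ (Finset.sum_le_sum_of_subset_of_nonneg ?_ (fun i _ _ => hw i))
    intro i hi
    simp only [Finset.mem_filter, Finset.mem_univ, true_and]
    have h1 : i ≠ 0 := fun h => hD0 (h ▸ hi)
    have h2 : i.val ≠ 0 := fun h => h1 (Fin.ext (by simp [h]))
    exact ⟨by omega, i.isLt⟩
  -- g m = S - w 0
  have hgmval : g m = S - w 0 := by
    have h := Finset.sum_filter_add_sum_filter_not Finset.univ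
      (fun i : Fin m => 1 ≤ i.val ∧ i.val < m) w
    have he : Finset.univ.filter (fun i : Fin m => ¬(1 ≤ i.val ∧ i.val < m)) = {0} := by
      ext i
      simp only [Finset.mem_filter, Finset.mem_univ, true_and, Finset.mem_singleton]
      have hlt := i.isLt
      constructor
      · intro h; apply Fin.ext; simp only [Fin.val_zero]; omega
      · intro h; subst h; simp
    rw [he, Finset.sum_singleton] at h
    show (∑ i ∈ Finset.univ.filter (fun i : Fin m => 1 ≤ i.val ∧ i.val < m), w i) = S - w 0
    linarith
  have hw0c : w 0 < c := by
    by_contra h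
    push_neg at h
    have := hcon' m hm le_rfl (by rw [hgmval]; linarith)
    linarith
  have h1m : 1 < m := by omega
  have hg2 : g 2 = w ⟨1, h1m⟩ := by
    have he : Finset.univ.filter (fun i : Fin m => 1 ≤ i.val ∧ i.val < 2) = {⟨1, h1m⟩} := by
      ext i
      simp only [Finset.mem_filter, Finset.mem_univ, true_and, Finset.mem_singleton, Fin.ext_iff]
      omega
    show (∑ i ∈ Finset.univ.filter (fun i : Fin m => 1 ≤ i.val ∧ i.val < 2), w i) = _
    rw [he, Finset.sum_singleton]
  -- largest t with g t < c
  set T : Finset ℕ := (Finset.Icc 2 m).filter (fun t => g t < c) with hTdef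
  have h2T : 2 ∈ T := by
    simp only [hTdef, Finset.mem_filter, Finset.mem_Icc]
    exact ⟨⟨le_rfl, hm⟩, by rw [hg2]; exact lt_of_le_of_lt (hmono _) hw0c⟩
  have hTne : T.Nonempty := ⟨2, h2T⟩
  set t := T.max' hTne with htdef
  have htT : t ∈ T := T.max'_mem hTne
  simp only [hTdef, Finset.mem_filter, Finset.mem_Icc] at htT
  obtain ⟨⟨ht2, htm⟩, hgtc⟩ := htT
  have htltm : t < m := by
    rcases lt_or_eq_of_le htm with h | h
    · exact h
    · exfalso; rw [h] at hgtc; linarith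
  have hgt1 : c ≤ g (t + 1) := by
    by_contra h
    push_neg at h
    have hmem : t + 1 ∈ T := by
      simp only [hTdef, Finset.mem_filter, Finset.mem_Icc]
      exact ⟨⟨by omega, by omega⟩, h⟩
    have := T.le_max' _ hmem
    omega
  have hstep : g (t + 1) = g t + w ⟨t, htltm⟩ := hgstep t (by omega) htltm
  have hSgt1 : S - g (t + 1) < c := by
    by_contra h
    push_neg at h
    have := hcon' (t + 1) (by omega) (by omega) h
    linarith
  -- t = 2
  have hteq : t = 2 := by
    by_contra hne
    have ht3 : 3 ≤ t := by omega
    have h2m : 2 < m := by omega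
    have hwt : S - 2*c < w ⟨t, htltm⟩ := by linarith
    have hsub : ({⟨1, h1m⟩, ⟨2, h2m⟩} : Finset (Fin m)) ⊆
        Finset.univ.filter (fun i : Fin m => 1 ≤ i.val ∧ i.val < t) := by
      intro i hi
      simp only [Finset.mem_insert, Finset.mem_singleton] at hi
      simp only [Finset.mem_filter, Finset.mem_univ, true_and]
      rcases hi with h | h <;> subst h <;> simp <;> omega
    have hpair : w ⟨1, h1m⟩ + w ⟨2, h2m⟩ ≤ g t := by
      have := Finset.sum_le_sum_of_subset_of_nonneg hsub (fun i _ _ => hw i)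
      rw [Finset.sum_pair (by simp [Fin.ext_iff])] at this
      exact this
    have hle1 : w ⟨t, htltm⟩ ≤ w ⟨1, h1m⟩ := hsort _ _ (by rw [Fin.le_def]; simpa using by omega)
    have hle2 : w ⟨t, htltm⟩ ≤ w ⟨2, h2m⟩ := hsort _ _ (by rw [Fin.le_def]; simpa using by omega)
    linarith
  have h2m : 2 < m := by omega
  have hee : (⟨t, htltm⟩ : Fin m) = ⟨2, h2m⟩ := Fin.ext (by simp [hteq])
  have hg3 : g 3 = w ⟨1, h1m⟩ + w ⟨2, h2m⟩ := by
    have h := hstep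
    rw [hee, hteq] at h
    norm_num at h
    rw [h, hg2]
  have hS3 : S - (w ⟨1, h1m⟩ + w ⟨2, h2m⟩) < c := by
    rw [hteq] at hSgt1
    norm_num at hSgt1
    rw [← hg3]
    exact hSgt1
  -- final contradiction via the MMS partition
  set T3 : Finset (Fin m) := {0, ⟨1, h1m⟩, ⟨2, h2m⟩} with hT3
  have hn1 : (0 : Fin m) ∉ ({⟨1, h1m⟩, ⟨2, h2m⟩} : Finset (Fin m)) := by
    simp [Fin.ext_iff]
  have hn2 : (⟨1, h1m⟩ : Fin m) ∉ ({⟨2, h2m⟩} : Finset (Fin m)) := by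
    simp [Fin.ext_iff]
  have hsum3 : ∑ i ∈ T3, w i = w 0 + w ⟨1, h1m⟩ + w ⟨2, h2m⟩ := by
    rw [hT3, Finset.sum_insert hn1, Finset.sum_insert hn2, Finset.sum_singleton]
    ring
  have hcard3 : T3.card = 3 := by
    rw [hT3, Finset.card_insert_of_notMem hn1, Finset.card_insert_of_notMem hn2,
      Finset.card_singleton]
  have hcardsplit : (B ∩ T3).card + (Bᶜ ∩ T3).card = 3 := by
    rw [← hcard3, ← Finset.card_union_of_disjoint]
    · congr 1
      rw [← Finset.union_inter_distrib_right, Finset.union_compl, Finset.univ_inter]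
    · refine Finset.disjoint_left.mpr ?_
      intro a ha hb
      exact (Finset.mem_compl.mp (Finset.mem_inter.mp hb).1) (Finset.mem_inter.mp ha).1
  obtain ⟨D, hDμ, hDcard⟩ : ∃ D : Finset (Fin m), μ ≤ ∑ i ∈ D, w i ∧ (D ∩ T3).card ≤ 1 := by
    by_cases h : (B ∩ T3).card ≤ 1
    · exact ⟨B, hB, h⟩
    · exact ⟨Bᶜ, hBc, by omega⟩
  have hD1 : ∑ i ∈ D ∩ T3, w i ≤ w 0 := by
    rcases Finset.eq_empty_or_nonempty (D ∩ T3) with h | h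
    · rw [h, Finset.sum_empty]; exact hw 0
    · have hc1 : (D ∩ T3).card = 1 := le_antisymm hDcard (Finset.card_pos.mpr h)
      obtain ⟨j, hj⟩ := Finset.card_eq_one.mp hc1
      rw [hj, Finset.sum_singleton]
      exact hsort 0 j (hzle j)
  have hD2 : ∑ i ∈ D \ T3, w i ≤ ∑ i ∈ T3ᶜ, w i := by
    refine Finset.sum_le_sum_of_subset_of_nonneg ?_ (fun i _ _ => hw i)
    intro i hi
    rw [Finset.mem_compl]
    exact (Finset.mem_sdiff.mp hi).2
  have hsplit : ∑ i ∈ D, w i = ∑ i ∈ D ∩ T3, w i + ∑ i ∈ D \ T3, w i :=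
    (Finset.sum_inter_add_sum_sdiff D T3 w).symm
  have hcompl : ∑ i ∈ T3ᶜ, w i = S - (w 0 + w ⟨1, h1m⟩ + w ⟨2, h2m⟩) := by
    have h := Finset.sum_add_sum_compl T3 w
    rw [hsum3] at h
    rw [hSdef]
    linarith
  linarith

/-- `ρ_{2,1} = 4/5`: for every additive valuation over `m ≥ 2` goods (values sorted in
non-increasing order), `NS_{2,1} ≥ (4/5)·MMS_2`; and for item values `3,2,2,2,1`,
`NS_{2,1} = 4` while `MMS_2 = 5`. -/
theorem rho_two_one_eq_four_fifths :
    (∀ (m : ℕ) (w : Fin m → ℝ), 2 ≤ m → (∀ i, 0 ≤ w i) →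
      (∀ i j : Fin m, i ≤ j → w j ≤ w i) →
      (4 / 5 : ℝ) * MMS2 w ≤ NS21 w) ∧
    NS21 (![3, 2, 2, 2, 1] : Fin 5 → ℝ) = 4 ∧
    MMS2 (![3, 2, 2, 2, 1] : Fin 5 → ℝ) = 5 := by
  refine ⟨?_, ?_, ?_⟩
  · intro m w hm hw hsort
    have hbddNS : BddAbove {x : ℝ | ∃ t : ℕ, 2 ≤ t ∧ t ≤ m ∧
        x ≤ ∑ i ∈ Finset.univ.filter (fun i : Fin m => i.val = 0 ∨ t ≤ i.val), w i ∧
        x ≤ ∑ i ∈ Finset.univ.filter (fun i : Fin m => 1 ≤ i.val ∧ i.val < t), w i} := by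
      refine ⟨∑ i, w i, fun x hx => ?_⟩
      obtain ⟨t, _, _, h1, _⟩ := hx
      exact h1.trans (Finset.sum_le_sum_of_subset_of_nonneg
        (Finset.filter_subset _ _) (fun i _ _ => hw i))
    -- MMS2 w is bounded by an attained value
    obtain ⟨B₀, _, hB₀⟩ := Finset.exists_mem_eq_sup' (Finset.univ_nonempty :
        (Finset.univ : Finset (Finset (Fin m))).Nonempty)
      (fun B : Finset (Fin m) => min (∑ i ∈ B, w i) (∑ i ∈ Bᶜ, w i))
    have hMle : MMS2 w ≤ min (∑ i ∈ B₀, w i) (∑ i ∈ B₀ᶜ, w i) := by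
      rw [← hB₀]
      refine csSup_le ⟨min (∑ i ∈ B₀, w i) (∑ i ∈ B₀ᶜ, w i),
        ⟨B₀, min_le_left _ _, min_le_right _ _⟩⟩ ?_
      rintro x ⟨B, h1, h2⟩
      exact (le_min h1 h2).trans (Finset.le_sup'
        (fun B : Finset (Fin m) => min (∑ i ∈ B, w i) (∑ i ∈ Bᶜ, w i)) (Finset.mem_univ B))
    set μ := MMS2 w with hμdef
    rcases le_or_gt μ 0 with hμ0 | hμ0
    · -- trivial case : NS21 ≥ 0
      have h0mem : (0 : ℝ) ∈ {x : ℝ | ∃ t : ℕ, 2 ≤ t ∧ t ≤ m ∧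
          x ≤ ∑ i ∈ Finset.univ.filter (fun i : Fin m => i.val = 0 ∨ t ≤ i.val), w i ∧
          x ≤ ∑ i ∈ Finset.univ.filter (fun i : Fin m => 1 ≤ i.val ∧ i.val < t), w i} :=
        ⟨2, le_rfl, hm, Finset.sum_nonneg (fun i _ => hw i), Finset.sum_nonneg (fun i _ => hw i)⟩
      have := le_csSup hbddNS h0mem
      unfold NS21
      nlinarith
    · have hBμ : μ ≤ ∑ i ∈ B₀, w i := hMle.trans (min_le_left _ _)
      have hBcμ : μ ≤ ∑ i ∈ B₀ᶜ, w i := hMle.trans (min_le_right _ _)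
      obtain ⟨t, ht2, htm, h1, h2⟩ := key_combinatorial w hm hw hsort μ hμ0 B₀ hBμ hBcμ
      have hmem : (4/5*μ : ℝ) ∈ {x : ℝ | ∃ t : ℕ, 2 ≤ t ∧ t ≤ m ∧
          x ≤ ∑ i ∈ Finset.univ.filter (fun i : Fin m => i.val = 0 ∨ t ≤ i.val), w i ∧
          x ≤ ∑ i ∈ Finset.univ.filter (fun i : Fin m => 1 ≤ i.val ∧ i.val < t), w i} := by
        exact ⟨t, ht2, htm, by rw [ns_compl_sum]; exact h1, h2⟩
      have := le_csSup hbddNS hmem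
      unfold NS21
      linarith
  · -- NS21 ![3,2,2,2,1] = 4
    have hmem : (4 : ℝ) ∈ {x : ℝ | ∃ t : ℕ, 2 ≤ t ∧ t ≤ 5 ∧
        x ≤ ∑ i ∈ Finset.univ.filter (fun i : Fin 5 => i.val = 0 ∨ t ≤ i.val),
          (![3, 2, 2, 2, 1] : Fin 5 → ℝ) i ∧
        x ≤ ∑ i ∈ Finset.univ.filter (fun i : Fin 5 => 1 ≤ i.val ∧ i.val < t),
          (![3, 2, 2, 2, 1] : Fin 5 → ℝ) i} := by
      refine ⟨3, by norm_num, by norm_num, ?_, ?_⟩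
      · rw [show Finset.univ.filter (fun i : Fin 5 => i.val = 0 ∨ 3 ≤ i.val) = {0, 3, 4} by decide]
        rw [Finset.sum_insert (by decide), Finset.sum_insert (by decide), Finset.sum_singleton]
        norm_num [Matrix.cons_val_three, Matrix.cons_val_four, Matrix.cons_val_two]
      · rw [show Finset.univ.filter (fun i : Fin 5 => 1 ≤ i.val ∧ i.val < 3) = {1, 2} by decide]
        rw [Finset.sum_insert (by decide), Finset.sum_singleton]
        norm_num [Matrix.cons_val_three, Matrix.cons_val_four, Matrix.cons_val_two]
    have hub : ∀ x ∈ {x : ℝ | ∃ t : ℕ, 2 ≤ t ∧ t ≤ 5 ∧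
        x ≤ ∑ i ∈ Finset.univ.filter (fun i : Fin 5 => i.val = 0 ∨ t ≤ i.val),
          (![3, 2, 2, 2, 1] : Fin 5 → ℝ) i ∧
        x ≤ ∑ i ∈ Finset.univ.filter (fun i : Fin 5 => 1 ≤ i.val ∧ i.val < t),
          (![3, 2, 2, 2, 1] : Fin 5 → ℝ) i}, x ≤ 4 := by
      rintro x ⟨t, ht2, ht5, h1, h2⟩
      interval_cases t
      · rw [show Finset.univ.filter (fun i : Fin 5 => 1 ≤ i.val ∧ i.val < 2) = {1} by decide,
          Finset.sum_singleton] at h2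
        norm_num at h2
        linarith
      · rw [show Finset.univ.filter (fun i : Fin 5 => 1 ≤ i.val ∧ i.val < 3) = {1, 2} by decide,
          Finset.sum_insert (by decide), Finset.sum_singleton] at h2
        norm_num [Matrix.cons_val_three, Matrix.cons_val_four, Matrix.cons_val_two] at h2
        linarith
      · rw [show Finset.univ.filter (fun i : Fin 5 => i.val = 0 ∨ 4 ≤ i.val) = {0, 4} by decide,
          Finset.sum_insert (by decide), Finset.sum_singleton] at h1
        norm_num [Matrix.cons_val_three, Matrix.cons_val_four, Matrix.cons_val_two] at h1
        linarith
      · rw [show Finset.univ.filter (fun i : Fin 5 => i.val = 0 ∨ 5 ≤ i.val) = {0} by decide,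
          Finset.sum_singleton] at h1
        norm_num at h1
        linarith
    unfold NS21
    exact le_antisymm (csSup_le ⟨4, hmem⟩ hub) (le_csSup ⟨4, hub⟩ hmem)
  · -- MMS2 ![3,2,2,2,1] = 5
    have hmem : (5 : ℝ) ∈ {x : ℝ | ∃ B : Finset (Fin 5),
        x ≤ ∑ i ∈ B, (![3, 2, 2, 2, 1] : Fin 5 → ℝ) i ∧
        x ≤ ∑ i ∈ Bᶜ, (![3, 2, 2, 2, 1] : Fin 5 → ℝ) i} := by
      refine ⟨{0, 1}, ?_, ?_⟩
      · rw [Finset.sum_insert (by decide), Finset.sum_singleton]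
        norm_num
      · rw [show ({0, 1}ᶜ : Finset (Fin 5)) = {2, 3, 4} by decide]
        rw [Finset.sum_insert (by decide), Finset.sum_insert (by decide), Finset.sum_singleton]
        norm_num [Matrix.cons_val_three, Matrix.cons_val_four, Matrix.cons_val_two]
    have hub : ∀ x ∈ {x : ℝ | ∃ B : Finset (Fin 5),
        x ≤ ∑ i ∈ B, (![3, 2, 2, 2, 1] : Fin 5 → ℝ) i ∧
        x ≤ ∑ i ∈ Bᶜ, (![3, 2, 2, 2, 1] : Fin 5 → ℝ) i}, x ≤ 5 := by
      rintro x ⟨B, h1, h2⟩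
      have htot := Finset.sum_add_sum_compl B (![3, 2, 2, 2, 1] : Fin 5 → ℝ)
      rw [Fin.sum_univ_five] at htot
      norm_num [Matrix.cons_val_three, Matrix.cons_val_four, Matrix.cons_val_two] at htot
      linarith
    unfold MMS2
    exact le_antisymm (csSup_le ⟨5, hmem⟩ hub) (le_csSup ⟨5, hub⟩ hmem)
end

section
/- For the class of additive valuations over goods, ρ_{2,2} = 5/6: for every additive valuation v over m ≥ 2 items, NS_{2,2}(v) ≥ (5/6)·MMS_2(v), and for the valuation with item values 4,3,2,2,1, NS_{2,2}(v) = 5 while MMS_2(v) = 6. -/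
/-- The nested share `NS_{2,2}`: the best value over partitions in which bundle `B₂`
is a consecutive block `e_{a+1}, …, e_b` of items and `B₁` is its complement (a prefix
together with a suffix). -/
noncomputable def NS22 {m : ℕ} (w : Fin m → ℝ) : ℝ :=
  sSup {x : ℝ | ∃ a b : ℕ, a ≤ b ∧ b ≤ m ∧
    x ≤ ∑ i ∈ Finset.univ.filter (fun i : Fin m => a ≤ i.val ∧ i.val < b), w i ∧
    x ≤ ∑ i ∈ Finset.univ.filter (fun i : Fin m => i.val < a ∨ b ≤ i.val), w i}

open Finset

namespace RhoAux

variable {m : ℕ}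

lemma crossing (P : ℕ → ℝ) (hmono : ∀ i j : ℕ, i ≤ j → P i ≤ P j) (c : ℝ) (a n : ℕ)
    (han : a ≤ n) (ha : P a < c) (hn : c ≤ P n) :
    ∃ j, a ≤ j ∧ j < n ∧ P j < c ∧ c ≤ P (j + 1) := by
  by_contra h
  push_neg at h
  have key : ∀ d, a + d ≤ n → P (a + d) < c := by
    intro d
    induction d with
    | zero => intro _; simpa using ha
    | succ d ih =>
      intro hd
      have h1 : P (a + d) < c := ih (by omega)
      exact h (a + d) (by omega) (by omega) h1
  have := key (n - a) (by omega)
  rw [show a + (n - a) = n from by omega] at this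
  linarith

def Psum (w : Fin m → ℝ) (j : ℕ) : ℝ :=
  ∑ i ∈ Finset.univ.filter (fun i : Fin m => i.val < j), w i

lemma Psum_zero (w : Fin m → ℝ) : Psum w 0 = 0 := by simp [Psum]

lemma Psum_succ (w : Fin m → ℝ) (j : ℕ) (hj : j < m) :
    Psum w (j + 1) = Psum w j + w ⟨j, hj⟩ := by
  have h : Finset.univ.filter (fun i : Fin m => i.val < j + 1)
      = insert ⟨j, hj⟩ (Finset.univ.filter (fun i : Fin m => i.val < j)) := by
    ext i
    simp [Fin.ext_iff]
    omega
  unfold Psum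
  rw [h, Finset.sum_insert (by simp), add_comm]

lemma Psum_mono (w : Fin m → ℝ) (hw : ∀ i, 0 ≤ w i) :
    ∀ a b : ℕ, a ≤ b → Psum w a ≤ Psum w b := by
  intro a b hab
  apply Finset.sum_le_sum_of_subset_of_nonneg
  · intro i hi
    simp only [Finset.mem_filter, Finset.mem_univ, true_and] at *
    omega
  · intro i _ _; exact hw i

lemma Psum_top (w : Fin m → ℝ) (j : ℕ) (hj : m ≤ j) : Psum w j = ∑ i, w i := by
  unfold Psum
  congr 1
  apply Finset.filter_true_of_mem
  intro i _
  exact lt_of_lt_of_le i.isLt hj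

lemma sum_Ival (w : Fin m → ℝ) (a b : ℕ) (hab : a ≤ b) :
    ∑ i ∈ Finset.univ.filter (fun i : Fin m => a ≤ i.val ∧ i.val < b), w i
      = Psum w b - Psum w a := by
  have hdisj : Disjoint (Finset.univ.filter (fun i : Fin m => i.val < a))
      (Finset.univ.filter (fun i : Fin m => a ≤ i.val ∧ i.val < b)) := by
    simp only [Finset.disjoint_left, Finset.mem_filter, Finset.mem_univ, true_and]
    intro i h1 h2
    omega
  have hun : Finset.univ.filter (fun i : Fin m => i.val < b)
      = Finset.univ.filter (fun i : Fin m => i.val < a)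
        ∪ Finset.univ.filter (fun i : Fin m => a ≤ i.val ∧ i.val < b) := by
    ext i; simp; omega
  have h2 : Psum w b = Psum w a
      + ∑ i ∈ Finset.univ.filter (fun i : Fin m => a ≤ i.val ∧ i.val < b), w i := by
    unfold Psum; rw [hun, Finset.sum_union hdisj]
  linarith

lemma sum_Icompl (w : Fin m → ℝ) (a b : ℕ) :
    ∑ i ∈ Finset.univ.filter (fun i : Fin m => i.val < a ∨ b ≤ i.val), w i
      = (∑ i, w i) - ∑ i ∈ Finset.univ.filter (fun i : Fin m => a ≤ i.val ∧ i.val < b), w i := by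
  have h := Finset.sum_filter_add_sum_filter_not Finset.univ (fun i : Fin m => a ≤ i.val ∧ i.val < b) w
  have heq : Finset.univ.filter (fun i : Fin m => ¬(a ≤ i.val ∧ i.val < b))
      = Finset.univ.filter (fun i : Fin m => i.val < a ∨ b ≤ i.val) := by
    ext i; simp; omega
  rw [heq] at h
  linarith

lemma ns22_bddAbove (w : Fin m → ℝ) (hw : ∀ i, 0 ≤ w i) :
    BddAbove {x : ℝ | ∃ a b : ℕ, a ≤ b ∧ b ≤ m ∧
      x ≤ ∑ i ∈ Finset.univ.filter (fun i : Fin m => a ≤ i.val ∧ i.val < b), w i ∧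
      x ≤ ∑ i ∈ Finset.univ.filter (fun i : Fin m => i.val < a ∨ b ≤ i.val), w i} := by
  refine ⟨∑ i, w i, ?_⟩
  rintro x ⟨a, b, -, -, h1, -⟩
  refine h1.trans (Finset.sum_le_sum_of_subset_of_nonneg (Finset.filter_subset _ _) ?_)
  intro i _ _; exact hw i

lemma ns22_ge (w : Fin m → ℝ) (hw : ∀ i, 0 ≤ w i) (x : ℝ) (a b : ℕ)
    (hab : a ≤ b) (hbm : b ≤ m)
    (h1 : x ≤ Psum w b - Psum w a)
    (h2 : x ≤ (∑ i, w i) - (Psum w b - Psum w a)) : x ≤ NS22 w := by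
  apply le_csSup (ns22_bddAbove w hw)
  exact ⟨a, b, hab, hbm, by rw [sum_Ival w a b hab]; exact h1,
    by rw [sum_Icompl w a b, sum_Ival w a b hab]; exact h2⟩

lemma mms2_exists (w : Fin m → ℝ) :
    ∃ A : Finset (Fin m), MMS2 w ≤ ∑ i ∈ A, w i ∧ MMS2 w ≤ ∑ i ∈ Aᶜ, w i := by
  obtain ⟨A, -, hA⟩ := Finset.exists_max_image (Finset.univ : Finset (Finset (Fin m)))
    (fun B => min (∑ i ∈ B, w i) (∑ i ∈ Bᶜ, w i)) ⟨∅, Finset.mem_univ _⟩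
  have hle : MMS2 w ≤ min (∑ i ∈ A, w i) (∑ i ∈ Aᶜ, w i) := by
    apply csSup_le
    · exact ⟨min (∑ i ∈ A, w i) (∑ i ∈ Aᶜ, w i), A, min_le_left _ _, min_le_right _ _⟩
    · rintro x ⟨B, h1, h2⟩
      exact (le_min h1 h2).trans (hA B (Finset.mem_univ B))
  exact ⟨A, hle.trans (min_le_left _ _), hle.trans (min_le_right _ _)⟩

lemma sorted_le (w : Fin m → ℝ) (hs : ∀ i j : Fin m, i ≤ j → w j ≤ w i)
    (p q : ℕ) (hq : q < m) (hpq : p ≤ q) : w ⟨q, hq⟩ ≤ w ⟨p, by omega⟩ :=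
  hs ⟨p, by omega⟩ ⟨q, hq⟩ (by simp [Fin.le_def]; omega)

lemma sum2 (w : Fin m → ℝ) (hs : ∀ i j : Fin m, i ≤ j → w j ≤ w i)
    (n : ℕ) (hn : n + 1 < m) (a b : Fin m)
    (hab : a ≠ b) (ha : a.val ≤ n + 1) (hb : b.val ≤ n + 1) :
    w ⟨n, by omega⟩ + w ⟨n + 1, hn⟩ ≤ w a + w b := by
  have key : ∀ x y : Fin m, x.val < y.val → y.val ≤ n + 1 →
      w ⟨n, by omega⟩ + w ⟨n + 1, hn⟩ ≤ w x + w y := by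
    intro x y h1 h2
    have e1 : w x ≥ w ⟨n, by omega⟩ := hs x ⟨n, by omega⟩ (by simp [Fin.le_def]; omega)
    have e2 : w y ≥ w ⟨n + 1, hn⟩ := hs y ⟨n + 1, hn⟩ (by simp [Fin.le_def]; omega)
    linarith
  have hab' : a.val ≠ b.val := fun h => hab (Fin.ext h)
  rcases Nat.lt_trichotomy a.val b.val with h1 | h1 | h1
  · have := key a b h1 hb; linarith
  · exact absurd h1 hab'
  · have := key b a h1 ha; linarith

lemma sum2' (w : Fin m → ℝ) (hs : ∀ i j : Fin m, i ≤ j → w j ≤ w i)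
    (hm : 2 < m) (a b : Fin m) (hab : a ≠ b) (ha : 1 ≤ a.val) (hb : 1 ≤ b.val) :
    w a + w b ≤ w ⟨1, by omega⟩ + w ⟨2, hm⟩ := by
  have key : ∀ x y : Fin m, x.val < y.val → 1 ≤ x.val →
      w x + w y ≤ w ⟨1, by omega⟩ + w ⟨2, hm⟩ := by
    intro x y h1 h2
    have e1 : w x ≤ w ⟨1, by omega⟩ := hs ⟨1, by omega⟩ x (by simp [Fin.le_def]; omega)
    have e2 : w y ≤ w ⟨2, hm⟩ := hs ⟨2, hm⟩ y (by simp [Fin.le_def]; omega)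
    linarith
  have hab' : a.val ≠ b.val := fun h => hab (Fin.ext h)
  rcases Nat.lt_trichotomy a.val b.val with h1 | h1 | h1
  · have := key a b h1 ha; linarith
  · exact absurd h1 hab'
  · have := key b a h1 hb; linarith

lemma sum3 (w : Fin m → ℝ) (hs : ∀ i j : Fin m, i ≤ j → w j ≤ w i)
    (n : ℕ) (hn : n + 2 < m) (a b c : Fin m)
    (hab : a ≠ b) (hac : a ≠ c) (hbc : b ≠ c)
    (ha : a.val ≤ n + 2) (hb : b.val ≤ n + 2) (hc : c.val ≤ n + 2) :
    w ⟨n, by omega⟩ + w ⟨n + 1, by omega⟩ + w ⟨n + 2, hn⟩ ≤ w a + w b + w c := by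
  have key : ∀ x y z : Fin m, x.val < y.val → y.val < z.val → z.val ≤ n + 2 →
      w ⟨n, by omega⟩ + w ⟨n + 1, by omega⟩ + w ⟨n + 2, hn⟩ ≤ w x + w y + w z := by
    intro x y z h1 h2 h3
    have e1 : w x ≥ w ⟨n, by omega⟩ := hs x ⟨n, by omega⟩ (by simp [Fin.le_def]; omega)
    have e2 : w y ≥ w ⟨n + 1, by omega⟩ := hs y ⟨n + 1, by omega⟩ (by simp [Fin.le_def]; omega)
    have e3 : w z ≥ w ⟨n + 2, hn⟩ := hs z ⟨n + 2, hn⟩ (by simp [Fin.le_def]; omega)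
    linarith
  have hab' : a.val ≠ b.val := fun h => hab (Fin.ext h)
  have hac' : a.val ≠ c.val := fun h => hac (Fin.ext h)
  have hbc' : b.val ≠ c.val := fun h => hbc (Fin.ext h)
  rcases Nat.lt_trichotomy a.val b.val with h1 | h1 | h1
  · rcases Nat.lt_trichotomy b.val c.val with h2 | h2 | h2
    · have := key a b c h1 h2 hc; linarith
    · exact absurd h2 hbc'
    · rcases Nat.lt_trichotomy a.val c.val with h3 | h3 | h3
      · have := key a c b h3 h2 hb; linarith
      · exact absurd h3 hac'
      · have := key c a b h3 h1 hb; linarith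
  · exact absurd h1 hab'
  · rcases Nat.lt_trichotomy a.val c.val with h3 | h3 | h3
    · have := key b a c h1 h3 hc; linarith
    · exact absurd h3 hac'
    · rcases Nat.lt_trichotomy b.val c.val with h2 | h2 | h2
      · have := key b c a h2 h3 ha; linarith
      · exact absurd h2 hbc'
      · have := key c b a h2 h1 ha; linarith

lemma pair_le (w : Fin m → ℝ) (hw : ∀ i, 0 ≤ w i) (X : Finset (Fin m)) (a b : Fin m)
    (hab : a ≠ b) (ha : a ∈ X) (hb : b ∈ X) :
    w a + w b ≤ ∑ i ∈ X, w i := by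
  have h1 : ({a, b} : Finset (Fin m)) ⊆ X := by
    intro x hx; simp at hx; rcases hx with rfl | rfl <;> assumption
  rw [← Finset.sum_pair hab]
  exact Finset.sum_le_sum_of_subset_of_nonneg h1 (fun i _ _ => hw i)

lemma triple_le (w : Fin m → ℝ) (hw : ∀ i, 0 ≤ w i) (X : Finset (Fin m)) (a b c : Fin m)
    (hab : a ≠ b) (hac : a ≠ c) (hbc : b ≠ c) (ha : a ∈ X) (hb : b ∈ X) (hc : c ∈ X) :
    w a + w b + w c ≤ ∑ i ∈ X, w i := by
  have h1 : ({a, b, c} : Finset (Fin m)) ⊆ X := by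
    intro x hx; simp at hx; rcases hx with rfl | rfl | rfl <;> assumption
  have h2 : ∑ i ∈ ({a, b, c} : Finset (Fin m)), w i = w a + w b + w c := by
    rw [Finset.sum_insert (by simp [hab, hac]), Finset.sum_pair hbc]; ring
  rw [← h2]
  exact Finset.sum_le_sum_of_subset_of_nonneg h1 (fun i _ _ => hw i)


lemma main (m : ℕ) (w : Fin m → ℝ) (hm : 2 ≤ m) (hw : ∀ i, 0 ≤ w i)
    (hs : ∀ i j : Fin m, i ≤ j → w j ≤ w i) :
    (5 / 6 : ℝ) * MMS2 w ≤ NS22 w := by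
  have hT0 : (0:ℝ) ≤ ∑ i, w i := Finset.sum_nonneg fun i _ => hw i
  obtain ⟨A, hA1, hA2⟩ := mms2_exists w
  set T : ℝ := ∑ i, w i with hT
  set μ : ℝ := MMS2 w with hμ
  rcases le_or_gt μ 0 with hμ0 | hμ0
  · refine ns22_ge w hw _ 0 0 le_rfl (by omega) ?_ ?_
    · rw [Psum_zero]; linarith
    · rw [Psum_zero]; rw [← hT]; linarith
  · have hAsum : ∑ i ∈ A, w i + ∑ i ∈ Aᶜ, w i = T := Finset.sum_add_sum_compl A w
    have hT2 : 2 * μ ≤ T := by linarith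
    set c : ℝ := 5 / 6 * μ with hc
    have hc0 : 0 < c := by rw [hc]; linarith
    have hcμ : c < μ := by rw [hc]; linarith
    suffices hex : ∃ a b : ℕ, a ≤ b ∧ b ≤ m ∧ c ≤ Psum w b - Psum w a ∧
        c ≤ T - (Psum w b - Psum w a) by
      obtain ⟨a, b, h1, h2, h3, h4⟩ := hex
      exact ns22_ge w hw _ a b h1 h2 h3 (by rw [← hT]; exact h4)
    by_contra hcon
    push_neg at hcon
    have hmono := Psum_mono w hw
    have hPtop : Psum w m = T := by rw [Psum_top w m le_rfl]
    have hside : ∀ X : Finset (Fin m), μ ≤ ∑ i ∈ Xᶜ, w i → T - c < ∑ i ∈ X, w i → False := by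
      intro X h1 h2
      have h3 : ∑ i ∈ X, w i + ∑ i ∈ Xᶜ, w i = T := Finset.sum_add_sum_compl X w
      linarith
    have h0m : 0 < m := by omega
    have h1m : 1 < m := by omega
    have hP1 : Psum w 1 = w ⟨0, h0m⟩ := by rw [Psum_succ w 0 h0m, Psum_zero]; ring
    have hw0 : w ⟨0, h0m⟩ < c := by
      by_contra hcc
      push_neg at hcc
      have hkey := hcon 0 1 (by omega) (by omega) (by rw [Psum_zero, hP1]; linarith)
      rw [Psum_zero, hP1] at hkey
      by_cases h0A : (⟨0, h0m⟩ : Fin m) ∈ A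
      · have h5 : w ⟨0, h0m⟩ ≤ ∑ i ∈ A, w i := Finset.single_le_sum (fun i _ => hw i) h0A
        linarith
      · have h0c : (⟨0, h0m⟩ : Fin m) ∈ Aᶜ := Finset.mem_compl.mpr h0A
        have h5 : w ⟨0, h0m⟩ ≤ ∑ i ∈ Aᶜ, w i := Finset.single_le_sum (fun i _ => hw i) h0c
        linarith
    have hwall : ∀ i : Fin m, w i < c := fun i =>
      lt_of_le_of_lt (hs ⟨0, h0m⟩ i (by simp [Fin.le_def])) hw0
    -- crossing from 0
    obtain ⟨k, -, hkm, hPk, hPk1⟩ := crossing (Psum w) hmono c 0 m (by omega)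
      (by rw [Psum_zero]; exact hc0) (by rw [hPtop]; linarith)
    have hTk1 : T - Psum w (k + 1) < c := by
      have h5 := hcon 0 (k + 1) (by omega) (by omega) (by rw [Psum_zero]; linarith)
      rw [Psum_zero] at h5; linarith
    have hwk : T - 2 * c < w ⟨k, hkm⟩ := by
      have h5 := Psum_succ w k hkm; linarith
    have hk1 : 1 ≤ k := by
      by_contra hh
      have hk0 : k = 0 := by omega
      subst hk0
      rw [zero_add, hP1] at hPk1
      linarith
    have hk2 : k ≤ 2 := by
      by_contra hh
      push_neg at hh
      have e3 : Psum w 3 ≤ Psum w k := hmono 3 k (by omega)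
      have s3 : Psum w 3 = w ⟨0, h0m⟩ + w ⟨1, by omega⟩ + w ⟨2, by omega⟩ := by
        rw [Psum_succ w 2 (by omega), Psum_succ w 1 h1m, Psum_succ w 0 h0m, Psum_zero]; ring
      have e0 : w ⟨k, hkm⟩ ≤ w ⟨0, h0m⟩ := sorted_le w hs 0 k hkm (by omega)
      have e1 : w ⟨k, hkm⟩ ≤ w ⟨1, by omega⟩ := sorted_le w hs 1 k hkm (by omega)
      have e2 : w ⟨k, hkm⟩ ≤ w ⟨2, by omega⟩ := sorted_le w hs 2 k hkm (by omega)
      rw [hc] at *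
      linarith
    -- crossing from 1
    obtain ⟨j, hj1, hjm, hDj, hDj1⟩ := crossing (fun n => Psum w n - Psum w 1)
      (fun i j hij => sub_le_sub_right (hmono i j hij) _) c 1 m (by omega)
      (by show Psum w 1 - Psum w 1 < c; simp only [sub_self]; exact hc0)
      (by show c ≤ Psum w m - Psum w 1; rw [hPtop, hP1]; linarith)
    have hTj1 : T - (Psum w (j + 1) - Psum w 1) < c := hcon 1 (j + 1) (by omega) (by omega) hDj1
    have hwj : T - 2 * c < w ⟨j, hjm⟩ := by
      have h5 := Psum_succ w j hjm; linarith
    have hj2 : 2 ≤ j := by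
      by_contra hh
      have hj1' : j = 1 := by omega
      subst hj1'
      have s2 : Psum w 2 = Psum w 1 + w ⟨1, h1m⟩ := Psum_succ w 1 h1m
      have := hwall ⟨1, h1m⟩
      linarith
    have hj3 : j ≤ 3 := by
      by_contra hh
      push_neg at hh
      have e4 : Psum w 4 ≤ Psum w j := hmono 4 j (by omega)
      have s4 : Psum w 4 = Psum w 1 + w ⟨1, h1m⟩ + w ⟨2, by omega⟩ + w ⟨3, by omega⟩ := by
        rw [Psum_succ w 3 (by omega), Psum_succ w 2 (by omega), Psum_succ w 1 h1m]
      have e1 : w ⟨j, hjm⟩ ≤ w ⟨1, h1m⟩ := sorted_le w hs 1 j hjm (by omega)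
      have e2 : w ⟨j, hjm⟩ ≤ w ⟨2, by omega⟩ := sorted_le w hs 2 j hjm (by omega)
      have e3 : w ⟨j, hjm⟩ ≤ w ⟨3, by omega⟩ := sorted_le w hs 3 j hjm (by omega)
      rw [hc] at *
      linarith
    -- helper: no side of the partition contains three items of value > T - 2c with a
    -- triple sum bound exceeding T - c
    have no3 : ∀ (n : ℕ) (hn : n + 2 < m),
        T - c < w ⟨n, by omega⟩ + w ⟨n + 1, by omega⟩ + w ⟨n + 2, hn⟩ →
        ∀ (X : Finset (Fin m)), (X = A ∨ X = Aᶜ) → ∀ a b c' : Fin m, a ≠ b → a ≠ c' → b ≠ c' →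
        a.val ≤ n + 2 → b.val ≤ n + 2 → c'.val ≤ n + 2 →
        a ∈ X → b ∈ X → c' ∈ X → False := by
      intro n hn hbig X hX a b c' hab hac hbc ha hb hcv haX hbX hcX
      have h1 := triple_le w hw X a b c' hab hac hbc haX hbX hcX
      have h2 := sum3 w hs n hn a b c' hab hac hbc ha hb hcv
      rcases hX with rfl | rfl
      · exact hside X hA2 (by linarith)
      · refine hside Aᶜ ?_ (by linarith)
        rw [compl_compl]; exact hA1
    have card2 : ∀ (n : ℕ) (hn : n + 2 < m),
        T - c < w ⟨n, by omega⟩ + w ⟨n + 1, by omega⟩ + w ⟨n + 2, hn⟩ →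
        ∀ (F : Finset (Fin m)), (∀ x ∈ F, x.val ≤ n + 2) →
        ∀ (X : Finset (Fin m)), (X = A ∨ X = Aᶜ) → (F ∩ X).card ≤ 2 := by
      intro n hn hbig F hF X hX
      by_contra hcc
      push_neg at hcc
      obtain ⟨t, hts, htc⟩ := Finset.exists_subset_card_eq (s := F ∩ X) (n := 3) (by omega)
      obtain ⟨a, b, c', hab, hac, hbc, rfl⟩ := Finset.card_eq_three.mp htc
      have ha := hts (show a ∈ ({a, b, c'} : Finset (Fin m)) by simp)
      have hb := hts (show b ∈ ({a, b, c'} : Finset (Fin m)) by simp)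
      have hcv := hts (show c' ∈ ({a, b, c'} : Finset (Fin m)) by simp)
      exact no3 n hn hbig X hX a b c' hab hac hbc
        (hF a (Finset.mem_of_mem_inter_left ha))
        (hF b (Finset.mem_of_mem_inter_left hb))
        (hF c' (Finset.mem_of_mem_inter_left hcv))
        (Finset.mem_of_mem_inter_right ha)
        (Finset.mem_of_mem_inter_right hb)
        (Finset.mem_of_mem_inter_right hcv)
    have card_split : ∀ F : Finset (Fin m), (F ∩ A).card + (F ∩ Aᶜ).card = F.card := by
      intro F
      have h1 := Finset.card_filter_add_card_filter_not (s := F) (p := (· ∈ A))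
      rw [Finset.filter_mem_eq_inter] at h1
      have h2 : F.filter (fun x => ¬ x ∈ A) = F ∩ Aᶜ := by
        ext x; simp [Finset.mem_compl]
      rw [h2] at h1
      exact h1
    -- now case on k
    have hkcase : k = 1 ∨ k = 2 := by omega
    have hjcase : j = 2 ∨ j = 3 := by omega
    rcases hkcase with rfl | rfl
    · -- k = 1 : Psum 2 > T - c
      rcases hjcase with rfl | rfl
      · -- j = 2 : w1 + w2 > T - c ; all pairs among first three are big
        have h2m : 2 < m := hjm
        have s2 : Psum w 2 = Psum w 1 + w ⟨1, h1m⟩ := Psum_succ w 1 h1m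
        have s3 : Psum w 3 = Psum w 2 + w ⟨2, h2m⟩ := Psum_succ w 2 h2m
        have hbig : T - c < w ⟨1, h1m⟩ + w ⟨2, h2m⟩ := by linarith
        have same : ∀ X : Finset (Fin m), (X = A ∨ X = Aᶜ) → ∀ a b : Fin m, a ≠ b →
            a.val ≤ 2 → b.val ≤ 2 → a ∈ X → b ∈ X → False := by
          intro X hX a b hab ha hb haX hbX
          have h1 := pair_le w hw X a b hab haX hbX
          have h2 := sum2 w hs 1 h2m a b hab ha hb
          rcases hX with rfl | rfl
          · exact hside X hA2 (by linarith)
          · refine hside Aᶜ ?_ (by linarith)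
            rw [compl_compl]; exact hA1
        have ne01 : (⟨0, h0m⟩ : Fin m) ≠ ⟨1, h1m⟩ := by simp [Fin.ext_iff]
        have ne02 : (⟨0, h0m⟩ : Fin m) ≠ ⟨2, h2m⟩ := by simp [Fin.ext_iff]
        have ne12 : (⟨1, h1m⟩ : Fin m) ≠ ⟨2, h2m⟩ := by simp [Fin.ext_iff]
        by_cases m0 : (⟨0, h0m⟩ : Fin m) ∈ A <;>
          by_cases m1 : (⟨1, h1m⟩ : Fin m) ∈ A <;>
          by_cases m2 : (⟨2, h2m⟩ : Fin m) ∈ A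
        · exact same A (Or.inl rfl) _ _ ne01 (by simp) (by simp) m0 m1
        · exact same A (Or.inl rfl) _ _ ne01 (by simp) (by simp) m0 m1
        · exact same A (Or.inl rfl) _ _ ne02 (by simp) (by simp) m0 m2
        · exact same Aᶜ (Or.inr rfl) _ _ ne12 (by simp) (by simp)
            (Finset.mem_compl.mpr m1) (Finset.mem_compl.mpr m2)
        · exact same A (Or.inl rfl) _ _ ne12 (by simp) (by simp) m1 m2
        · exact same Aᶜ (Or.inr rfl) _ _ ne02 (by simp) (by simp)
            (Finset.mem_compl.mpr m0) (Finset.mem_compl.mpr m2)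
        · exact same Aᶜ (Or.inr rfl) _ _ ne01 (by simp) (by simp)
            (Finset.mem_compl.mpr m0) (Finset.mem_compl.mpr m1)
        · exact same Aᶜ (Or.inr rfl) _ _ ne01 (by simp) (by simp)
            (Finset.mem_compl.mpr m0) (Finset.mem_compl.mpr m1)
      · -- k = 1, j = 3
        have h3m : 3 < m := hjm
        have h2m : 2 < m := by omega
        have s2 : Psum w 2 = Psum w 1 + w ⟨1, h1m⟩ := Psum_succ w 1 h1m
        have s3 : Psum w 3 = Psum w 2 + w ⟨2, h2m⟩ := Psum_succ w 2 h2m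
        have s4 : Psum w 4 = Psum w 3 + w ⟨3, h3m⟩ := Psum_succ w 3 h3m
        -- facts : Psum 2 > T - c (hTk1/hPk1 with k=1), w1+w2 < c (hDj), w1+w2+w3 > T-c (hTj1)
        have hw3 : T - 2 * c < w ⟨3, h3m⟩ := hwj
        have hw2 : T - 2 * c < w ⟨2, h2m⟩ :=
          lt_of_lt_of_le hw3 (sorted_le w hs 2 3 h3m (by omega))
        have hbig : T - c < w ⟨1, h1m⟩ + w ⟨2, h2m⟩ + w ⟨3, h3m⟩ := by linarith
        set F4 : Finset (Fin m) :=
          {⟨0, h0m⟩, ⟨1, h1m⟩, ⟨2, h2m⟩, ⟨3, h3m⟩} with hF4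
        have hF4mem : ∀ x : Fin m, x ∈ F4 ↔ x.val ≤ 3 := by
          intro x
          simp [hF4, Fin.ext_iff]
          omega
        have hF4card : F4.card = 4 := by
          rw [hF4]
          rw [Finset.card_insert_of_notMem (by simp [Fin.ext_iff]),
            Finset.card_insert_of_notMem (by simp [Fin.ext_iff]),
            Finset.card_insert_of_notMem (by simp [Fin.ext_iff]),
            Finset.card_singleton]
        have hcA : (F4 ∩ A).card ≤ 2 :=
          card2 1 h3m hbig F4 (fun x hx => (hF4mem x).mp hx) A (Or.inl rfl)
        have hcAc : (F4 ∩ Aᶜ).card ≤ 2 :=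
          card2 1 h3m hbig F4 (fun x hx => (hF4mem x).mp hx) Aᶜ (Or.inr rfl)
        have hsplit := card_split F4
        have hcA2 : (F4 ∩ A).card = 2 := by omega
        have hcAc2 : (F4 ∩ Aᶜ).card = 2 := by omega
        -- the side X not containing item 0
        have end2 : ∀ X : Finset (Fin m), μ ≤ ∑ i ∈ X, w i →
            ∀ a b : Fin m, a ≠ b → 1 ≤ a.val → a.val ≤ 3 → 1 ≤ b.val → b.val ≤ 3 →
            (∀ x : Fin m, x ∈ X → x = a ∨ x = b ∨ 4 ≤ x.val) → False := by
          intro X hμX a b hab ha1 ha3 hb1 hb3 hchar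
          set S : Finset (Fin m) := Finset.univ.filter (fun i : Fin m => ¬ i.val < 4) with hS
          have hsub : X ⊆ {a, b} ∪ S := by
            intro x hx
            rcases hchar x hx with rfl | rfl | h4
            · simp
            · simp
            · simp [hS, Finset.mem_union, Finset.mem_filter]
              omega
          have hdisj : Disjoint ({a, b} : Finset (Fin m)) S := by
            simp only [Finset.disjoint_left, Finset.mem_insert, Finset.mem_singleton]
            rintro x (rfl | rfl) hxS <;>
              · simp [hS, Finset.mem_filter] at hxS
                omega
          have h1 : ∑ i ∈ X, w i ≤ ∑ i ∈ ({a, b} ∪ S), w i :=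
            Finset.sum_le_sum_of_subset_of_nonneg hsub (fun i _ _ => hw i)
          have h2 : ∑ i ∈ ({a, b} ∪ S), w i = (w a + w b) + ∑ i ∈ S, w i := by
            rw [Finset.sum_union hdisj, Finset.sum_pair hab]
          have h3 : Psum w 4 + ∑ i ∈ S, w i = T := by
            have h5 := Finset.sum_filter_add_sum_filter_not Finset.univ
              (fun i : Fin m => i.val < 4) w
            rw [← hT] at h5
            exact h5
          have h4 := sum2' w hs h2m a b hab ha1 hb1
          rw [hc] at *
          linarith
        by_cases h0A : (⟨0, h0m⟩ : Fin m) ∈ A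
        · obtain ⟨a, b, hab, hFX⟩ := Finset.card_eq_two.mp hcAc2
          have haF : a ∈ F4 ∩ Aᶜ := by rw [hFX]; simp
          have hbF : b ∈ F4 ∩ Aᶜ := by rw [hFX]; simp
          have ha3 : a.val ≤ 3 := (hF4mem a).mp (Finset.mem_of_mem_inter_left haF)
          have hb3 : b.val ≤ 3 := (hF4mem b).mp (Finset.mem_of_mem_inter_left hbF)
          have ha0 : a ≠ ⟨0, h0m⟩ := by
            rintro rfl
            exact (Finset.mem_compl.mp (Finset.mem_of_mem_inter_right haF)) h0A
          have hb0 : b ≠ ⟨0, h0m⟩ := by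
            rintro rfl
            exact (Finset.mem_compl.mp (Finset.mem_of_mem_inter_right hbF)) h0A
          refine end2 Aᶜ hA2 a b hab ?_ ha3 ?_ hb3 ?_
          · rcases Nat.eq_zero_or_pos a.val with h | h
            · exact absurd (Fin.ext h) ha0
            · exact h
          · rcases Nat.eq_zero_or_pos b.val with h | h
            · exact absurd (Fin.ext h) hb0
            · exact h
          · intro x hx
            by_cases hx4 : x.val < 4
            · have hxF : x ∈ F4 ∩ Aᶜ := Finset.mem_inter.mpr ⟨(hF4mem x).mpr (by omega), hx⟩
              rw [hFX] at hxF
              simp at hxF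
              rcases hxF with rfl | rfl
              · exact Or.inl rfl
              · exact Or.inr (Or.inl rfl)
            · exact Or.inr (Or.inr (by omega))
        · obtain ⟨a, b, hab, hFX⟩ := Finset.card_eq_two.mp hcA2
          have haF : a ∈ F4 ∩ A := by rw [hFX]; simp
          have hbF : b ∈ F4 ∩ A := by rw [hFX]; simp
          have ha3 : a.val ≤ 3 := (hF4mem a).mp (Finset.mem_of_mem_inter_left haF)
          have hb3 : b.val ≤ 3 := (hF4mem b).mp (Finset.mem_of_mem_inter_left hbF)
          have ha0 : a ≠ ⟨0, h0m⟩ := by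
            rintro rfl
            exact h0A (Finset.mem_of_mem_inter_right haF)
          have hb0 : b ≠ ⟨0, h0m⟩ := by
            rintro rfl
            exact h0A (Finset.mem_of_mem_inter_right hbF)
          refine end2 A hA1 a b hab ?_ ha3 ?_ hb3 ?_
          · rcases Nat.eq_zero_or_pos a.val with h | h
            · exact absurd (Fin.ext h) ha0
            · exact h
          · rcases Nat.eq_zero_or_pos b.val with h | h
            · exact absurd (Fin.ext h) hb0
            · exact h
          · intro x hx
            by_cases hx4 : x.val < 4
            · have hxF : x ∈ F4 ∩ A := Finset.mem_inter.mpr ⟨(hF4mem x).mpr (by omega), hx⟩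
              rw [hFX] at hxF
              simp at hxF
              rcases hxF with rfl | rfl
              · exact Or.inl rfl
              · exact Or.inr (Or.inl rfl)
            · exact Or.inr (Or.inr (by omega))
    · -- k = 2 : Psum 2 < c, Psum 3 > T - c
      -- first, j = 2 is impossible
      have h2m : 2 < m := hkm
      have s1 : Psum w 1 = Psum w 0 + w ⟨0, h0m⟩ := Psum_succ w 0 h0m
      have s2 : Psum w 2 = Psum w 1 + w ⟨1, h1m⟩ := Psum_succ w 1 h1m
      have s3 : Psum w 3 = Psum w 2 + w ⟨2, h2m⟩ := Psum_succ w 2 h2m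
      have hjj : j = 3 := by
        rcases hjcase with rfl | rfl
        · exfalso
          -- hDj1 : c ≤ Psum 3 - Psum 1 = w1 + w2 ≤ w0 + w1 = Psum 2 < c
          have e02 : w ⟨2, h2m⟩ ≤ w ⟨0, h0m⟩ := sorted_le w hs 0 2 h2m (by omega)
          rw [Psum_zero] at s1
          linarith
        · rfl
      subst hjj
      have h3m : 3 < m := hjm
      have s4 : Psum w 4 = Psum w 3 + w ⟨3, h3m⟩ := Psum_succ w 3 h3m
      have hw2 : T - 2 * c < w ⟨2, h2m⟩ := hwk
      have hw3 : T - 2 * c < w ⟨3, h3m⟩ := hwj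
      -- crossing from 2
      obtain ⟨j', hj'2, hj'm, hEj, hEj1⟩ := crossing (fun n => Psum w n - Psum w 2)
        (fun i j hij => sub_le_sub_right (hmono i j hij) _) c 2 m (by omega)
        (by show Psum w 2 - Psum w 2 < c; simp only [sub_self]; exact hc0)
        (by show c ≤ Psum w m - Psum w 2; rw [hPtop]; linarith)
      have hTj'1 : T - (Psum w (j' + 1) - Psum w 2) < c :=
        hcon 2 (j' + 1) (by omega) (by omega) hEj1
      have hwj' : T - 2 * c < w ⟨j', hj'm⟩ := by
        have h5 := Psum_succ w j' hj'm; linarith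
      have hj'4 : j' = 4 := by
        rcases Nat.lt_or_ge j' 5 with h5 | h5
        · -- j' ∈ {2,3,4}
          rcases (by omega : j' = 2 ∨ j' = 3 ∨ j' = 4) with rfl | rfl | rfl
          · exfalso
            have := hwall ⟨2, h2m⟩
            linarith
          · exfalso
            have e02 : w ⟨2, h2m⟩ ≤ w ⟨0, h0m⟩ := sorted_le w hs 0 2 h2m (by omega)
            have e13 : w ⟨3, h3m⟩ ≤ w ⟨1, h1m⟩ := sorted_le w hs 1 3 h3m (by omega)
            rw [Psum_zero] at s1
            linarith
          · rfl
        · exfalso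
          have h4m : 4 < m := by omega
          have s5 : Psum w 5 = Psum w 4 + w ⟨4, h4m⟩ := Psum_succ w 4 h4m
          have e5 : Psum w 5 ≤ Psum w j' := hmono 5 j' (by omega)
          have e2 : w ⟨j', hj'm⟩ ≤ w ⟨2, h2m⟩ := sorted_le w hs 2 j' hj'm (by omega)
          have e3 : w ⟨j', hj'm⟩ ≤ w ⟨3, h3m⟩ := sorted_le w hs 3 j' hj'm (by omega)
          have e4 : w ⟨j', hj'm⟩ ≤ w ⟨4, h4m⟩ := sorted_le w hs 4 j' hj'm (by omega)
          rw [hc] at *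
          linarith
      subst hj'4
      have h4m : 4 < m := hj'm
      have s5 : Psum w 5 = Psum w 4 + w ⟨4, h4m⟩ := Psum_succ w 4 h4m
      -- w2 + w3 + w4 = Psum 5 - Psum 2 > T - c
      have hbig : T - c < w ⟨2, h2m⟩ + w ⟨3, h3m⟩ + w ⟨4, h4m⟩ := by linarith
      set F5 : Finset (Fin m) :=
        {⟨0, h0m⟩, ⟨1, h1m⟩, ⟨2, h2m⟩, ⟨3, h3m⟩, ⟨4, h4m⟩} with hF5
      have hF5mem : ∀ x : Fin m, x ∈ F5 ↔ x.val ≤ 4 := by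
        intro x
        simp [hF5, Fin.ext_iff]
        omega
      have hF5card : F5.card = 5 := by
        rw [hF5]
        rw [Finset.card_insert_of_notMem (by simp [Fin.ext_iff]),
          Finset.card_insert_of_notMem (by simp [Fin.ext_iff]),
          Finset.card_insert_of_notMem (by simp [Fin.ext_iff]),
          Finset.card_insert_of_notMem (by simp [Fin.ext_iff]),
          Finset.card_singleton]
      have hcA : (F5 ∩ A).card ≤ 2 :=
        card2 2 h4m hbig F5 (fun x hx => (hF5mem x).mp hx) A (Or.inl rfl)
      have hcAc : (F5 ∩ Aᶜ).card ≤ 2 :=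
        card2 2 h4m hbig F5 (fun x hx => (hF5mem x).mp hx) Aᶜ (Or.inr rfl)
      have hsplit := card_split F5
      omega


lemma w5_nonneg : ∀ i : Fin 5, (0:ℝ) ≤ (![4, 3, 2, 2, 1] : Fin 5 → ℝ) i := by
  intro i
  fin_cases i <;> norm_num

lemma ns22_example : NS22 (![4, 3, 2, 2, 1] : Fin 5 → ℝ) = 5 := by
  set w : Fin 5 → ℝ := ![4, 3, 2, 2, 1] with hwdef
  have v0 : ((0 : Fin 5) : ℕ) = 0 := rfl
  have v1 : ((1 : Fin 5) : ℕ) = 1 := rfl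
  have v2 : ((2 : Fin 5) : ℕ) = 2 := rfl
  have v3 : ((3 : Fin 5) : ℕ) = 3 := rfl
  have v4 : ((4 : Fin 5) : ℕ) = 4 := rfl
  have c2 : (![4, 3, 2, 2, 1] : Fin 5 → ℝ) 2 = 2 := rfl
  have c3 : (![4, 3, 2, 2, 1] : Fin 5 → ℝ) 3 = 2 := rfl
  have c4 : (![4, 3, 2, 2, 1] : Fin 5 → ℝ) 4 = 1 := rfl
  have n2 : (2 : Fin 5) ≠ 0 := by decide
  have n3 : (3 : Fin 5) ≠ 0 := by decide
  have n4 : (4 : Fin 5) ≠ 0 := by decide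
  have hmem : (5:ℝ) ∈ {x : ℝ | ∃ a b : ℕ, a ≤ b ∧ b ≤ 5 ∧
      x ≤ ∑ i ∈ Finset.univ.filter (fun i : Fin 5 => a ≤ i.val ∧ i.val < b), w i ∧
      x ≤ ∑ i ∈ Finset.univ.filter (fun i : Fin 5 => i.val < a ∨ b ≤ i.val), w i} := by
    refine ⟨0, 2, by omega, by omega, ?_, ?_⟩
    · norm_num [Finset.sum_filter, Fin.sum_univ_five, hwdef, v0, v1, v2, v3, v4, c2, c3, c4, n2, n3, n4]
    · norm_num [Finset.sum_filter, Fin.sum_univ_five, hwdef, v0, v1, v2, v3, v4, c2, c3, c4, n2, n3, n4]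
  have hub : ∀ x ∈ {x : ℝ | ∃ a b : ℕ, a ≤ b ∧ b ≤ 5 ∧
      x ≤ ∑ i ∈ Finset.univ.filter (fun i : Fin 5 => a ≤ i.val ∧ i.val < b), w i ∧
      x ≤ ∑ i ∈ Finset.univ.filter (fun i : Fin 5 => i.val < a ∨ b ≤ i.val), w i}, x ≤ 5 := by
    rintro x ⟨a, b, hab, hb5, h1, h2⟩
    interval_cases b <;> interval_cases a <;>
      norm_num [Finset.sum_filter, Fin.sum_univ_five, hwdef, v0, v1, v2, v3, v4, c2, c3, c4, n2, n3, n4] at h1 h2 <;>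
      linarith
  apply le_antisymm
  · exact csSup_le ⟨5, hmem⟩ hub
  · exact le_csSup ⟨5, hub⟩ hmem

lemma mms2_example : MMS2 (![4, 3, 2, 2, 1] : Fin 5 → ℝ) = 6 := by
  set w : Fin 5 → ℝ := ![4, 3, 2, 2, 1] with hwdef
  have c2 : (![4, 3, 2, 2, 1] : Fin 5 → ℝ) 2 = 2 := rfl
  have c3 : (![4, 3, 2, 2, 1] : Fin 5 → ℝ) 3 = 2 := rfl
  have c4 : (![4, 3, 2, 2, 1] : Fin 5 → ℝ) 4 = 1 := rfl
  have n2 : (2 : Fin 5) ≠ 0 := by decide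
  have n3 : (3 : Fin 5) ≠ 0 := by decide
  have n4 : (4 : Fin 5) ≠ 0 := by decide
  have hT : ∑ i, w i = 12 := by
    rw [Fin.sum_univ_five]
    norm_num [hwdef, c2, c3, c4, n2, n3, n4]
  have hub : ∀ x ∈ {x : ℝ | ∃ B : Finset (Fin 5), x ≤ ∑ i ∈ B, w i ∧ x ≤ ∑ i ∈ Bᶜ, w i},
      x ≤ 6 := by
    rintro x ⟨B, h1, h2⟩
    have h3 : ∑ i ∈ B, w i + ∑ i ∈ Bᶜ, w i = ∑ i, w i := Finset.sum_add_sum_compl B w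
    rw [hT] at h3
    linarith
  have hmem : (6:ℝ) ∈ {x : ℝ | ∃ B : Finset (Fin 5), x ≤ ∑ i ∈ B, w i ∧ x ≤ ∑ i ∈ Bᶜ, w i} := by
    refine ⟨{0, 2}, ?_, ?_⟩
    · rw [Finset.sum_pair (by decide)]
      norm_num [hwdef, c2, c3, c4, n2, n3, n4]
    · have : ({0, 2} : Finset (Fin 5))ᶜ = {1, 3, 4} := by decide
      rw [this, Finset.sum_insert (by decide), Finset.sum_pair (by decide)]
      norm_num [hwdef, c2, c3, c4, n2, n3, n4]
  apply le_antisymm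
  · exact csSup_le ⟨6, hmem⟩ hub
  · exact le_csSup ⟨6, hub⟩ hmem

end RhoAux


/-- `ρ_{2,2} = 5/6`: for every additive valuation over `m ≥ 2` goods (values sorted in
non-increasing order), `NS_{2,2} ≥ (5/6)·MMS_2`; and for item values `4,3,2,2,1`,
`NS_{2,2} = 5` while `MMS_2 = 6`. -/
theorem rho_two_two_eq_five_sixths :
    (∀ (m : ℕ) (w : Fin m → ℝ), 2 ≤ m → (∀ i, 0 ≤ w i) →
      (∀ i j : Fin m, i ≤ j → w j ≤ w i) →
      (5 / 6 : ℝ) * MMS2 w ≤ NS22 w) ∧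
    NS22 (![4, 3, 2, 2, 1] : Fin 5 → ℝ) = 5 ∧
    MMS2 (![4, 3, 2, 2, 1] : Fin 5 → ℝ) = 6 := by
  exact ⟨RhoAux.main, RhoAux.ns22_example, RhoAux.mms2_example⟩
end
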